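/- Let s > 2 and let C ⊆ Z_{2^s}^4 be the subgroup generated by the two vectors (1,1,1,1) and (0, 2^{s−2}, 2^{s−1}, 3·2^{s−2}). Then the binary code Φ(C) ⊆ Z_2^{2^{s+1}} is linear, i.e. closed under addition. -/

import Mathlib

/-- The `i`-th digit of the binary expansion of `u : ZMod (2^s)`. -/
def gdigit (s : ℕ) (u : ZMod (2^s)) (i : ℕ) : ZMod 2 :=
  if (ZMod.val u).testBit i then 1 else 0

/-- Carlet's generalized Gray map `φ : ZMod (2^s) → (Z_2^{s-1} → Z_2)`:
the coordinate indexed by `y ∈ Z_2^{s-1}` is `u_{s-1} + ∑ u_i y_i`. -/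
def gray (s : ℕ) (u : ZMod (2^s)) : (Fin (s - 1) → ZMod 2) → ZMod 2 :=
  fun y => gdigit s u (s - 1) + ∑ i : Fin (s - 1), gdigit s u (i : ℕ) * y i

/-- The coordinatewise extension `Φ` of the Gray map, on vectors indexed by `ι`. -/
def PhiMap {ι : Type} (s : ℕ) (u : ι → ZMod (2^s)) :
    ι × (Fin (s - 1) → ZMod 2) → ZMod 2 :=
  fun p => gray s (u p.1) p.2

/-- A binary code is linear if it is closed under addition. -/
def IsLinearCode {V : Type} [Add V] (C : Set V) : Prop :=
  ∀ x ∈ C, ∀ y ∈ C, x + y ∈ C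

/-! ### Auxiliary lemmas -/

lemma F4 : ∀ A < 4, ∀ C < 4, ∀ b < 4, ∀ d < 4, ∃ f < 4, ∀ t < 4,
    ((A + b*t) % 4) ^^^ ((C + d*t) % 4) = ((A ^^^ C) + f*t) % 4 := by decide

lemma xor_split {m a c : ℕ} (ha : a < 2^m) (hc : c < 2^m) (X Y : ℕ) :
    (a + X*2^m) ^^^ (c + Y*2^m) = (a ^^^ c) + (X ^^^ Y)*2^m := by
  have hac := Nat.xor_lt_two_pow ha hc
  apply Nat.eq_of_testBit_eq
  intro j
  rw [Nat.add_comm a, Nat.add_comm c, Nat.add_comm (a^^^c), Nat.mul_comm X,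
    Nat.mul_comm Y, Nat.mul_comm (X ^^^ Y)]
  rw [Nat.testBit_xor, Nat.testBit_two_pow_mul_add _ ha, Nat.testBit_two_pow_mul_add _ hc,
    Nat.testBit_two_pow_mul_add _ hac]
  by_cases h : j < m <;> simp [h, Nat.testBit_xor]

lemma mod_decomp {m a : ℕ} (ha : a < 2^m) (t : ℕ) :
    (a + t*2^m) % (4*2^m) = a + (t % 4)*2^m := by
  have key : a + t*2^m = a + (t%4)*2^m + (t/4)*(4*2^m) := by
    conv_lhs => rw [← Nat.div_add_mod t 4]
    ring
  rw [key, Nat.add_mul_mod_self_right, Nat.mod_eq_of_lt]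
  have h1 : t % 4 < 4 := Nat.mod_lt _ (by norm_num)
  have h2 : (t%4)*2^m ≤ 3*2^m := Nat.mul_le_mul_right _ (by omega)
  omega

lemma gdigit_xor (s : ℕ) (u v : ZMod (2^s)) (i : ℕ) :
    gdigit s (↑(u.val ^^^ v.val)) i = gdigit s u i + gdigit s v i := by
  haveI : NeZero (2^s) := ⟨(Nat.two_pow_pos s).ne'⟩
  unfold gdigit
  rw [ZMod.val_natCast, Nat.mod_eq_of_lt (Nat.xor_lt_two_pow u.val_lt v.val_lt),
    Nat.testBit_xor]
  cases h1 : u.val.testBit i <;> cases h2 : v.val.testBit i <;> simp <;> decide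

lemma gray_xor (s : ℕ) (u v : ZMod (2^s)) :
    gray s (↑(u.val ^^^ v.val)) = gray s u + gray s v := by
  funext y
  show gray s _ y = gray s u y + gray s v y
  unfold gray
  simp only [gdigit_xor, add_mul, Finset.sum_add_distrib]
  ring

lemma val_form {s : ℕ} (hs : 2 ≤ s) (a b : ZMod (2^s)) (t : ℕ) :
    (a + b * ↑(t * 2^(s-2))).val
      = a.val % 2^(s-2) + ((a.val / 2^(s-2) + b.val * t) % 4) * 2^(s-2) := by
  haveI : NeZero (2^s) := ⟨(Nat.two_pow_pos s).ne'⟩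
  have h4M : 2^s = 4 * 2^(s-2) := by
    have h : s = (s-2) + 2 := by omega
    conv_lhs => rw [h]
    rw [pow_add]; ring
  have h1 : a + b * ↑(t * 2^(s-2)) = ↑(a.val + b.val * t * 2^(s-2)) := by
    push_cast
    rw [ZMod.natCast_val, ZMod.natCast_val, ZMod.cast_id, ZMod.cast_id]
    ring
  rw [h1, ZMod.val_natCast]
  have hdec : a.val = a.val % 2^(s-2) + (a.val / 2^(s-2)) * 2^(s-2) :=
    (Nat.mod_add_div' _ _).symm
  have key : a.val + b.val * t * 2^(s-2)
      = a.val % 2^(s-2) + (a.val / 2^(s-2) + b.val * t) * 2^(s-2) := by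
    rw [Nat.add_mul, ← Nat.add_assoc, ← hdec]
  rw [key]
  have hmd := mod_decomp (a := a.val % 2^(s-2)) (Nat.mod_lt _ (Nat.two_pow_pos (s-2)))
    (a.val / 2^(s-2) + b.val * t)
  rw [← h4M] at hmd
  exact hmd

lemma coordKey {s : ℕ} (hs : 2 ≤ s) (a b c d : ZMod (2^s)) :
    ∃ e f : ZMod (2^s), ∀ t : ℕ, t < 4 →
      (↑((a + b*↑(t*2^(s-2))).val ^^^ (c + d*↑(t*2^(s-2))).val) : ZMod (2^s))
        = e + f*↑(t*2^(s-2)) := by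
  haveI : NeZero (2^s) := ⟨(Nat.two_pow_pos s).ne'⟩
  set M := 2^(s-2) with hM
  have hMpos : 0 < M := Nat.two_pow_pos _
  have h4M : 2^s = 4 * M := by
    have h : s = (s-2) + 2 := by omega
    conv_lhs => rw [h]
    rw [pow_add]; ring
  set a' := a.val % M with ha'
  set A := a.val / M with hA
  set c' := c.val % M with hc'
  set C := c.val / M with hC
  have ha'M : a' < M := Nat.mod_lt _ hMpos
  have hc'M : c' < M := Nat.mod_lt _ hMpos
  have hAlt : A < 4 := by
    rw [hA, Nat.div_lt_iff_lt_mul hMpos]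
    have := a.val_lt; omega
  have hClt : C < 4 := by
    rw [hC, Nat.div_lt_iff_lt_mul hMpos]
    have := c.val_lt; omega
  obtain ⟨f0, hf0, hf⟩ := F4 A hAlt C hClt (b.val % 4) (Nat.mod_lt _ (by norm_num))
    (d.val % 4) (Nat.mod_lt _ (by norm_num))
  refine ⟨↑(a.val ^^^ c.val), ↑f0, fun t ht => ?_⟩
  have hbX : (A + b.val*t) % 4 = (A + (b.val % 4)*t) % 4 :=
    Nat.ModEq.add_left A ((Nat.mod_modEq b.val 4).symm.mul_right t)
  have hdY : (C + d.val*t) % 4 = (C + (d.val % 4)*t) % 4 :=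
    Nat.ModEq.add_left C ((Nat.mod_modEq d.val 4).symm.mul_right t)
  rw [val_form hs, val_form hs, ← ha', ← hA, ← hc', ← hC,
    xor_split ha'M hc'M]
  have hRHS : ((↑(a.val ^^^ c.val) : ZMod (2^s)) + ↑f0 * ↑(t*M))
      = ↑((a.val ^^^ c.val) + f0*t*M) := by
    push_cast; ring
  rw [hRHS]
  rw [ZMod.natCast_eq_natCast_iff]
  show _ % _ = _ % _
  have hxac : a.val ^^^ c.val = (a' ^^^ c') + (A ^^^ C)*M := by
    conv_lhs => rw [show a.val = a' + A*M from (Nat.mod_add_div' _ _).symm,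
      show c.val = c' + C*M from (Nat.mod_add_div' _ _).symm]
    exact xor_split ha'M hc'M _ _
  have hR : (a.val ^^^ c.val) + f0*t*M = (a' ^^^ c') + ((A ^^^ C) + f0*t)*M := by
    rw [hxac, Nat.add_mul]; ring
  have hxac' : a' ^^^ c' < M := Nat.xor_lt_two_pow ha'M hc'M
  have hL := mod_decomp hxac' ((A + b.val*t) % 4 ^^^ (C + d.val*t) % 4)
  rw [← h4M] at hL
  have hR2 := mod_decomp hxac' ((A ^^^ C) + f0*t)
  rw [← h4M] at hR2
  rw [hR, ← hM, hL, hR2]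
  have hxlt : (A + b.val*t) % 4 ^^^ (C + d.val*t) % 4 < 4 :=
    Nat.xor_lt_two_pow (x := _) (n := 2) (Nat.mod_lt _ (by norm_num))
      (Nat.mod_lt _ (by norm_num))
  rw [Nat.mod_eq_of_lt hxlt, hbX, hdY, hf t ht]

lemma mem_closure_pair {s : ℕ} (g1 g2 u : Fin 4 → ZMod (2^s)) :
    u ∈ AddSubgroup.closure ({g1, g2} : Set (Fin 4 → ZMod (2^s))) ↔
      ∃ a b : ZMod (2^s), u = a • g1 + b • g2 := by
  haveI : NeZero (2^s) := ⟨(Nat.two_pow_pos s).ne'⟩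
  have hsm : ∀ (a : ZMod (2^s)) (x : Fin 4 → ZMod (2^s)),
      x ∈ AddSubgroup.closure ({g1, g2} : Set (Fin 4 → ZMod (2^s))) →
      a • x ∈ AddSubgroup.closure ({g1, g2} : Set (Fin 4 → ZMod (2^s))) := by
    intro a x hx
    have h1 : a • x = a.val • x := by
      conv_lhs => rw [show a = ((a.val : ℕ) : ZMod (2^s)) by
        rw [ZMod.natCast_val, ZMod.cast_id]]
      exact Nat.cast_smul_eq_nsmul _ _ _
    rw [h1]
    exact AddSubgroup.nsmul_mem _ hx _
  constructor
  · intro hu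
    induction hu using AddSubgroup.closure_induction with
    | mem x hx =>
      rcases hx with rfl | rfl
      · exact ⟨1, 0, by simp⟩
      · exact ⟨0, 1, by simp⟩
    | zero => exact ⟨0, 0, by simp⟩
    | add x y hx hy ihx ihy =>
      obtain ⟨a, b, rfl⟩ := ihx
      obtain ⟨a', b', rfl⟩ := ihy
      exact ⟨a + a', b + b', by module⟩
    | neg x hx ihx =>
      obtain ⟨a, b, rfl⟩ := ihx
      exact ⟨-a, -b, by module⟩
  · rintro ⟨a, b, rfl⟩
    exact AddSubgroup.add_mem _
      (hsm a _ (AddSubgroup.subset_closure (by simp)))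
      (hsm b _ (AddSubgroup.subset_closure (by simp)))

lemma g2_apply {s : ℕ} (hs : 2 ≤ s) (j : Fin 4) :
    (![0, 2^(s-2), 2^(s-1), 3*2^(s-2)] : Fin 4 → ZMod (2^s)) j
      = ↑((j:ℕ) * 2^(s-2)) := by
  have h1 : s - 1 = (s-2) + 1 := by omega
  fin_cases j <;> push_cast <;> simp [h1, pow_succ] <;> ring

theorem gray_image_linear (s : ℕ) (hs : 2 < s) :
    IsLinearCode (PhiMap s ''
      ((AddSubgroup.closure
          ({(fun _ => 1 : Fin 4 → ZMod (2^s)),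
            ![0, 2 ^ (s - 2), 2 ^ (s - 1), 3 * 2 ^ (s - 2)]} :
            Set (Fin 4 → ZMod (2^s))) : AddSubgroup (Fin 4 → ZMod (2^s))) :
        Set (Fin 4 → ZMod (2^s)))) := by
  have hs2 : 2 ≤ s := le_of_lt hs
  set g1 : Fin 4 → ZMod (2^s) := (fun _ => 1) with hg1
  set g2 : Fin 4 → ZMod (2^s) := ![0, 2^(s-2), 2^(s-1), 3*2^(s-2)] with hg2
  rintro x ⟨u, hu, rfl⟩ y ⟨v, hv, rfl⟩
  rw [SetLike.mem_coe, mem_closure_pair] at hu hv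
  obtain ⟨a, b, rfl⟩ := hu
  obtain ⟨c, d, rfl⟩ := hv
  have happ : ∀ (a b : ZMod (2^s)) (j : Fin 4),
      (a • g1 + b • g2) j = a + b * ↑((j:ℕ) * 2^(s-2)) := by
    intro a b j
    simp only [Pi.add_apply, Pi.smul_apply, smul_eq_mul, hg1, mul_one, hg2, g2_apply hs2 j]
  obtain ⟨e, f, hef⟩ := coordKey hs2 a b c d
  refine ⟨e • g1 + f • g2, ?_, ?_⟩
  · rw [SetLike.mem_coe, mem_closure_pair]
    exact ⟨e, f, rfl⟩
  · funext p
    have hw : (e • g1 + f • g2) p.1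
        = ↑(((a • g1 + b • g2) p.1).val ^^^ ((c • g1 + d • g2) p.1).val) := by
      rw [happ, happ, happ, hef (p.1 : ℕ) p.1.isLt]
    show gray s _ p.2 = gray s _ p.2 + gray s _ p.2
    rw [hw, gray_xor]
    rfl
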